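/- arXiv:1703.08627 — 4 statements merged into one kernel-verified Lean document; each statement's English description precedes it below -/
import Mathlib

section
/- Let 0 < q < 1 and let G be a geometric random variable with P(G = k) = (1-q)q^k for k ∈ ℕ. Then the least significant bit of G (i.e., G mod 2) and the remaining bits (i.e., ⌊G/2⌋) are independent; moreover G mod 2 is Bernoulli with parameter q/(1+q), and ⌊G/2⌋ is geometric with parameter 1-q^2. -/
/-- If `G` is geometric with `P(G = k) = (1-q) q^k`, then the least significant bit
`G % 2` and the remaining bits `G / 2` are independent, `G % 2` is Bernoulli with
parameter `q/(1+q)`, and `G / 2` is geometric with parameter `1 - q^2`. -/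
theorem stmt_1 (q : ℝ) (hq0 : 0 < q) (hq1 : q < 1)
    (pG : ℕ → ℝ) (hG : ∀ k, pG k = (1 - q) * q ^ k) :
    -- the least significant bit is Bernoulli(q/(1+q))
    ((∑' k : ℕ, if k % 2 = 1 then pG k else 0) = q / (1 + q)
      ∧ (∑' k : ℕ, if k % 2 = 0 then pG k else 0) = 1 - q / (1 + q))
    -- the remaining bits form a geometric with parameter 1 - q^2
    ∧ (∀ b : ℕ, (∑' k : ℕ, if k / 2 = b then pG k else 0)
        = (1 - q ^ 2) * (q ^ 2) ^ b)
    -- independence: the joint law factors as the product of the marginals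
    ∧ (∀ a b : ℕ, a ≤ 1 →
        (∑' k : ℕ, if k % 2 = a ∧ k / 2 = b then pG k else 0)
          = (∑' k : ℕ, if k % 2 = a then pG k else 0)
            * (∑' k : ℕ, if k / 2 = b then pG k else 0)) := by
  have hq2 : q ^ 2 < 1 := by nlinarith
  have hq2' : (0:ℝ) ≤ q ^ 2 := by positivity
  have h1q : (1:ℝ) + q ≠ 0 := by positivity
  have hgeo : ∑' k : ℕ, (q ^ 2) ^ k = (1 - q ^ 2)⁻¹ :=
    tsum_geometric_of_lt_one hq2' hq2
  have hsq : Summable (fun k : ℕ => (q ^ 2) ^ k) :=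
    summable_geometric_of_lt_one hq2' hq2
  have key : ∀ c : ℝ, ∑' k : ℕ, c * (q ^ 2) ^ k = c / (1 - q ^ 2) := by
    intro c
    rw [tsum_mul_left, hgeo, div_eq_mul_inv]
  have hq1' : (1:ℝ) - q ≠ 0 := by linarith
  -- odd marginal
  have hodd : (∑' k : ℕ, if k % 2 = 1 then pG k else 0) = q / (1 + q) := by
    rw [← tsum_even_add_odd (f := fun k => if k % 2 = 1 then pG k else 0)]
    · have e1 : (fun k : ℕ => if (2 * k) % 2 = 1 then pG (2 * k) else 0) = fun _ => (0:ℝ) := by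
        funext k; rw [if_neg (by omega)]
      have e2 : (fun k : ℕ => if (2 * k + 1) % 2 = 1 then pG (2 * k + 1) else 0)
          = fun k => ((1 - q) * q) * (q ^ 2) ^ k := by
        funext k
        rw [if_pos (by omega), hG, pow_add, pow_mul, pow_one]
        ring
      rw [e1, e2, tsum_zero, key, zero_add]
      rw [show (1:ℝ) - q ^ 2 = (1 - q) * (1 + q) by ring]
      field_simp
    · exact summable_zero.congr (fun k => by rw [if_neg (by omega)])
    · apply (hsq.mul_left ((1 - q) * q)).congr
      intro k
      rw [if_pos (by omega), hG, pow_add, pow_mul, pow_one]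
      ring
  -- even marginal
  have heven : (∑' k : ℕ, if k % 2 = 0 then pG k else 0) = 1 / (1 + q) := by
    rw [← tsum_even_add_odd (f := fun k => if k % 2 = 0 then pG k else 0)]
    · have e1 : (fun k : ℕ => if (2 * k) % 2 = 0 then pG (2 * k) else 0)
          = fun k => (1 - q) * (q ^ 2) ^ k := by
        funext k; rw [if_pos (by omega), hG, pow_mul]
      have e2 : (fun k : ℕ => if (2 * k + 1) % 2 = 0 then pG (2 * k + 1) else 0)
          = fun _ => (0:ℝ) := by
        funext k; rw [if_neg (by omega)]
      rw [e1, e2, tsum_zero, key, add_zero]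
      rw [show (1:ℝ) - q ^ 2 = (1 - q) * (1 + q) by ring]
      field_simp
    · apply (hsq.mul_left (1 - q)).congr
      intro k; rw [if_pos (by omega), hG, pow_mul]
    · exact summable_zero.congr (fun k => by rw [if_neg (by omega)])
  have heven' : (∑' k : ℕ, if k % 2 = 0 then pG k else 0) = 1 - q / (1 + q) := by
    rw [heven]; field_simp; ring
  -- div marginal
  have hdiv : ∀ b : ℕ, (∑' k : ℕ, if k / 2 = b then pG k else 0)
      = (1 - q ^ 2) * (q ^ 2) ^ b := by
    intro b
    have hs : (∑' k : ℕ, if k / 2 = b then pG k else 0)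
        = ∑ k ∈ ({2 * b, 2 * b + 1} : Finset ℕ), (if k / 2 = b then pG k else 0) := by
      apply tsum_eq_sum
      intro k hk
      simp only [Finset.mem_insert, Finset.mem_singleton] at hk
      rw [if_neg (by omega)]
    rw [hs, Finset.sum_pair (by omega)]
    rw [if_pos (by omega), if_pos (by omega), hG, hG, ← pow_mul, pow_add]
    ring
  refine ⟨⟨hodd, heven'⟩, hdiv, ?_⟩
  intro a b ha
  have hjoint : (∑' k : ℕ, if k % 2 = a ∧ k / 2 = b then pG k else 0)
      = pG (2 * b + a) := by
    rw [tsum_eq_single (2 * b + a)]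
    · rw [if_pos ⟨by omega, by omega⟩]
    · intro k hk
      rw [if_neg (fun h => hk (by omega))]
  have hpow : ((q:ℝ) ^ 2) ^ b = q ^ (2 * b) := by rw [← pow_mul]
  rw [hjoint, hdiv b, hG, hpow]
  interval_cases a
  · rw [heven]
    field_simp
    ring
  · rw [hodd, pow_add, pow_one]
    field_simp
    ring
end

section
/- Probabilistic divide-and-conquer lemma: Let A and B be independent random elements of sets 𝒜 and ℬ respectively, and let E ⊆ 𝒜 × ℬ be an event with P((A,B) ∈ E) > 0. Let X be a random element of 𝒜 with distribution L(X) = L(A | (A,B) ∈ E), and let Y be a random element of ℬ whose conditional distribution given X = a is L(B | (a,B) ∈ E). Then the pair (X,Y) has the same distribution as (A,B) conditioned on E, i.e., for all measurable S ⊆ 𝒜 × ℬ, P((X,Y) ∈ S) = P((A,B) ∈ S | (A,B) ∈ E). -/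
/-- Probabilistic divide-and-conquer lemma (countable case). Let `A`, `B` be
independent discrete random elements with mass functions `pA`, `pB`, and let `E` be
an event of positive probability `PE`. Let `X` have the law of `A` conditioned on
`E`, and given `X = a` let `Y` have the law of `B` conditioned on `E` and `A = a`.
Then the pair `(X, Y)` has the law of `(A, B)` conditioned on `E`:
`P(X = a)·P(Y = b | X = a) = P(A = a, B = b)/P(E)` for `(a,b) ∈ E` (and `0` off `E`). -/
theorem stmt_10 {α β : Type*} (pA : α → ℝ) (pB : β → ℝ)
    (hA : ∀ a, 0 ≤ pA a) (hB : ∀ b, 0 ≤ pB b)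
    (hAsum : ∑' a, pA a = 1) (hBsum : ∑' b, pB b = 1)
    (E : Set (α × β)) [DecidablePred (· ∈ E)]
    (PE : ℝ) (hPE : PE = ∑' p : α × β, if p ∈ E then pA p.1 * pB p.2 else 0)
    (hPEpos : 0 < PE)
    (pX : α → ℝ)
    (hpX : ∀ a, pX a = (∑' b, if (a, b) ∈ E then pA a * pB b else 0) / PE)
    (pY : α → β → ℝ)
    (hpY : ∀ a b, pY a b
      = (if (a, b) ∈ E then pB b else 0) / (∑' b', if (a, b') ∈ E then pB b' else 0)) :
    ∀ a b, pX a * pY a b = (if (a, b) ∈ E then pA a * pB b else 0) / PE := by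
  intro a b
  have hBsummable : Summable pB := by
    by_contra h
    rw [tsum_eq_zero_of_not_summable h] at hBsum
    norm_num at hBsum
  have hSsummable : Summable (fun b' => if (a, b') ∈ E then pB b' else 0) :=
    hBsummable.of_nonneg_of_le (fun b' => by split <;> simp [hB b']) (fun b' => by
      split <;> simp [hB b'])
  have hfac : (∑' b', if (a, b') ∈ E then pA a * pB b' else 0)
      = pA a * ∑' b', if (a, b') ∈ E then pB b' else 0 := by
    rw [← tsum_mul_left]
    congr 1; funext b'; split <;> simp
  set S := ∑' b', if (a, b') ∈ E then pB b' else 0 with hS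
  rw [hpX, hpY, hfac]
  by_cases hzero : S = 0
  · have hterm : ∀ b', (if (a, b') ∈ E then pB b' else 0) = 0 := by
      intro b'
      have h1 : (if (a, b') ∈ E then pB b' else 0) ≤ S :=
        Summable.le_tsum hSsummable b' (fun j _ => by split <;> simp [hB j])
      have h2 : (0:ℝ) ≤ (if (a, b') ∈ E then pB b' else 0) := by
        split <;> simp [hB b']
      linarith [hzero ▸ h1]
    rw [hzero]
    have : (if (a, b) ∈ E then pA a * pB b else 0) = 0 := by
      have := hterm b
      split at this <;> split <;> simp_all
    simp [this]
  · have hiff : (if (a, b) ∈ E then pA a * pB b else 0)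
        = pA a * (if (a, b) ∈ E then pB b else 0) := by split <;> simp
    rw [div_mul_div_comm, hiff, ← hS]
    field_simp
end

section
/- Let 0 < x < 1 and let Z_1,...,Z_n be independent random variables with Z_i geometric with parameter 1 - x^i, i.e., P(Z_i = k) = (1 - x^i)x^{ik}. Then the event {Σ_{i=1}^n i·Z_i = n} has positive probability, and conditioned on this event, the joint distribution of (Z_1,...,Z_n) is uniform over the set of all (z_1,...,z_n) ∈ ℕ^n with Σ i·z_i = n; i.e., each integer partition of n (encoded by its part multiplicities) is equally likely, with conditional probability 1/p(n), where p(n) is the number of partitions of n. -/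
open Finset

lemma parts_eq_aux_stmt12 (n : ℕ) (p : Nat.Partition n) :
    p.parts = ∑ i : Fin n, Multiset.replicate (p.parts.count (i.val+1)) (i.val+1) := by
  ext j
  rw [Multiset.count_sum']
  simp only [Multiset.count_replicate]
  rcases Nat.eq_zero_or_pos j with hj | hj
  · subst hj
    rw [Multiset.count_eq_zero_of_notMem (fun h => (p.parts_pos h).ne' rfl)]
    refine (Finset.sum_eq_zero ?_).symm
    intro i _; simp
  · by_cases hle : j ≤ n
    · have hjn : j - 1 < n := by omega
      rw [Finset.sum_eq_single (⟨j-1, hjn⟩ : Fin n)]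
      · have : j - 1 + 1 = j := by omega
        simp [this]
      · intro b _ hb
        rw [if_neg]
        intro h
        apply hb
        apply Fin.ext
        simp at h ⊢; omega
      · simp
    · have hnot : j ∉ p.parts := by
        intro h
        have := Multiset.le_sum_of_mem h
        rw [p.parts_sum] at this
        omega
      rw [Multiset.count_eq_zero_of_notMem hnot]
      refine (Finset.sum_eq_zero ?_).symm
      intro i _
      rw [if_neg]
      omega

lemma card_eq_aux_stmt12 (n : ℕ) (S : Finset (Fin n → ℕ))
    (hS : S = (Fintype.piFinset fun _ : Fin n => Finset.range (n + 1)).filter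
        (fun z => ∑ i, (i.val + 1) * z i = n)) :
    S.card = Fintype.card (Nat.Partition n) := by
  rw [← Finset.card_univ]
  have memS : ∀ z : Fin n → ℕ, z ∈ S ↔ (∀ i, z i < n + 1) ∧ ∑ i, (i.val + 1) * z i = n := by
    intro z
    simp [hS, Fintype.mem_piFinset]
  apply Finset.card_bij'
    (i := fun z hz => (⟨∑ i : Fin n, Multiset.replicate (z i) (i.val+1),
      by
        intro j hj
        simp only [Multiset.mem_sum, Multiset.mem_replicate] at hj
        obtain ⟨i, _, _, rfl⟩ := hj
        omega,
      by
        rw [Multiset.sum_sum]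
        simp only [Multiset.sum_replicate, smul_eq_mul]
        rw [show (∑ i : Fin n, (z i) * (i.val+1)) = ∑ i : Fin n, (i.val+1) * z i from
          Finset.sum_congr rfl fun i _ => mul_comm _ _]
        exact ((memS z).1 hz).2⟩ : Nat.Partition n))
    (j := fun p _ => fun i => p.parts.count (i.val + 1))
  case hi => intro z hz; exact Finset.mem_univ _
  case hj =>
    intro p _
    rw [memS]
    constructor
    · intro i
      have hrep : Multiset.replicate (p.parts.count (i.val+1)) (i.val+1) ≤ p.parts :=
        Multiset.le_count_iff_replicate_le.mp le_rfl
      have := Multiset.card_le_card hrep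
      rw [Multiset.card_replicate] at this
      have hcard : Multiset.card p.parts • 1 ≤ p.parts.sum :=
        Multiset.card_nsmul_le_sum (fun a ha => p.parts_pos ha)
      rw [p.parts_sum, smul_eq_mul, mul_one] at hcard
      omega
    · have := congrArg Multiset.sum (parts_eq_aux_stmt12 n p)
      rw [p.parts_sum, Multiset.sum_sum] at this
      simp only [Multiset.sum_replicate, smul_eq_mul] at this
      exact (Finset.sum_congr rfl fun i _ => mul_comm _ _).trans this.symm
  case left_inv =>
    intro z hz
    funext i
    simp only
    rw [Multiset.count_sum']
    simp [Multiset.count_replicate, Fin.val_eq_val]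
  case right_inv =>
    intro p _
    apply Nat.Partition.ext
    exact (parts_eq_aux_stmt12 n p).symm

/-- Let `Z₁,…,Zₙ` be independent, `Zᵢ` geometric with parameter `1 - xⁱ`
(`P(Zᵢ = k) = (1 - xⁱ)x^{ik}`, here indexed so that part size `i+1` corresponds to
`i : Fin n`). The event `{∑ i·Zᵢ = n}` has positive probability, and conditioned on
it, the vector `(Z₁,…,Zₙ)` is uniform over all multiplicity vectors of partitions of
`n`: each such vector has conditional probability `1/p(n)`, where `p(n)` is the
number of partitions of `n`. -/
theorem stmt_12 (n : ℕ) (x : ℝ) (hx0 : 0 < x) (hx1 : x < 1)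
    (S : Finset (Fin n → ℕ))
    (hS : S = (Fintype.piFinset fun _ : Fin n => Finset.range (n + 1)).filter
        (fun z => ∑ i, (i.val + 1) * z i = n))
    (PE : ℝ)
    (hPE : PE = ∑ z ∈ S, ∏ i, ((1 - x ^ (i.val + 1)) * x ^ ((i.val + 1) * z i))) :
    0 < PE
    ∧ S.card = Fintype.card (Nat.Partition n)
    ∧ ∀ z : Fin n → ℕ, (∑ i, (i.val + 1) * z i = n) →
        (∏ i, ((1 - x ^ (i.val + 1)) * x ^ ((i.val + 1) * z i))) / PE
          = 1 / Fintype.card (Nat.Partition n) := by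
  have hcard := card_eq_aux_stmt12 n S hS
  set C : ℝ := ∏ i : Fin n, (1 - x ^ (i.val + 1)) with hC
  have hCpos : 0 < C := by
    apply Finset.prod_pos
    intro i _
    have : x ^ (i.val + 1) < 1 := pow_lt_one₀ hx0.le hx1 (Nat.succ_ne_zero _)
    linarith
  have hterm : ∀ z : Fin n → ℕ, (∑ i, (i.val + 1) * z i = n) →
      (∏ i, ((1 - x ^ (i.val + 1)) * x ^ ((i.val + 1) * z i))) = C * x ^ n := by
    intro z hz
    rw [Finset.prod_mul_distrib, ← hC, Finset.prod_pow_eq_pow_sum, hz]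
  have hmem : ∀ z ∈ S, ∑ i, (i.val + 1) * z i = n := by
    intro z hz
    rw [hS, Finset.mem_filter] at hz
    exact hz.2
  have hPE' : PE = S.card * (C * x ^ n) := by
    rw [hPE, Finset.sum_congr rfl (fun z hz => hterm z (hmem z hz))]
    simp [mul_comm]
  have hcardpos : 0 < S.card := hcard ▸ Fintype.card_pos
  have hPEpos : 0 < PE := by
    rw [hPE']
    positivity
  refine ⟨hPEpos, hcard, ?_⟩
  intro z hz
  rw [hterm z hz, hPE', hcard]
  have h1 : (0:ℝ) < Fintype.card (Nat.Partition n) := by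
    exact_mod_cast Fintype.card_pos
  have h2 : (0:ℝ) < C * x ^ n := by positivity
  field_simp
end

section
/- Let A be a random element of a countable set, E a positive-probability event, and suppose we sample a ~ L(A) and accept with probability s(a) = P(E | A = a) (rejecting and restarting otherwise); upon acceptance of a we sample y from L(B | E, A = a) where B is independent of A and E is an event of (A,B). Then the output (a, y) has distribution L((A,B) | E). -/
/-- PDC with soft rejection. Let `A`, `B` be independent discrete random variables
with mass functions `pA`, `pB`, and `E` an event of positive probability `PE`.
Repeatedly sample `a ~ L(A)` and accept with probability `s a = P(E | A = a)`
(summing a geometric series over the rejected trials); upon acceptance sample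
`y ~ L(B | E, A = a)`. Then the output `(a, y)` has law `L((A,B) | E)`:
`P(output = (a,b)) = P(A = a, B = b)/P(E)` for `(a,b) ∈ E`. -/
theorem stmt_17 {α β : Type*} (pA : α → ℝ) (pB : β → ℝ)
    (hA : ∀ a, 0 ≤ pA a) (hB : ∀ b, 0 ≤ pB b)
    (hAsum : ∑' a, pA a = 1) (hBsum : ∑' b, pB b = 1)
    (E : Set (α × β)) [DecidablePred (· ∈ E)]
    (PE : ℝ) (hPE : PE = ∑' p : α × β, if p ∈ E then pA p.1 * pB p.2 else 0)
    (hPEpos : 0 < PE)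
    -- s a = P(E | A = a)
    (s : α → ℝ) (hs : ∀ a, s a = ∑' b, if (a, b) ∈ E then pB b else 0)
    -- law of the first accepted value of A (geometric series over rejections)
    (outA : α → ℝ)
    (houtA : ∀ a, outA a
      = ∑' t : ℕ, (1 - ∑' a', pA a' * s a') ^ t * (pA a * s a))
    -- conditional sampling of B given acceptance of a
    (out : α → β → ℝ)
    (hout : ∀ a b, out a b = outA a * ((if (a, b) ∈ E then pB b else 0) / s a)) :
    ∀ a b, (a, b) ∈ E → out a b = pA a * pB b / PE := by
  -- summability facts
  have hAsummable : Summable pA := by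
    by_contra h
    rw [tsum_eq_zero_of_not_summable h] at hAsum
    norm_num at hAsum
  have hBsummable : Summable pB := by
    by_contra h
    rw [tsum_eq_zero_of_not_summable h] at hBsum
    norm_num at hBsum
  have hprod : Summable (fun p : α × β => pA p.1 * pB p.2) :=
    hAsummable.mul_of_nonneg hBsummable hA hB
  have hind : Summable (fun p : α × β => if p ∈ E then pA p.1 * pB p.2 else 0) := by
    apply Summable.of_nonneg_of_le (fun p => ?_) (fun p => ?_) hprod
    · split <;> [exact mul_nonneg (hA _) (hB _); exact le_rfl]
    · split <;> [exact le_rfl; exact mul_nonneg (hA _) (hB _)]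
  have hsind : ∀ a, Summable (fun b => if (a, b) ∈ E then pB b else 0) := by
    intro a
    apply Summable.of_nonneg_of_le (fun b => ?_) (fun b => ?_) hBsummable
    · split <;> [exact hB _; exact le_rfl]
    · split <;> [exact le_rfl; exact hB _]
  have hsnn : ∀ a, 0 ≤ s a := by
    intro a
    rw [hs]
    exact tsum_nonneg fun b => by split <;> [exact hB _; exact le_rfl]
  -- ∑' a, pA a * s a = PE
  have hsum : ∑' a', pA a' * s a' = PE := by
    have hfib : ∀ a, Summable (fun b => if (a, b) ∈ E then pA a * pB b else 0) := by
      intro a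
      refine ((hsind a).mul_left (pA a)).congr fun b => ?_
      split <;> simp
    rw [hPE, Summable.tsum_prod' hind hfib]
    refine tsum_congr fun a => ?_
    rw [hs, ← tsum_mul_left]
    refine tsum_congr fun b => ?_
    split <;> simp
  -- PE ≤ 1
  have hPEle : PE ≤ 1 := by
    rw [hPE, ← hAsum]
    calc (∑' p : α × β, if p ∈ E then pA p.1 * pB p.2 else 0)
        ≤ ∑' p : α × β, pA p.1 * pB p.2 := by
          apply Summable.tsum_le_tsum _ hind hprod
          intro p
          split <;> [exact le_rfl; exact mul_nonneg (hA _) (hB _)]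
      _ = ∑' a, pA a := by
          rw [Summable.tsum_prod' hprod (fun a => hBsummable.mul_left (pA a))]
          refine tsum_congr fun a => ?_
          simp only [tsum_mul_left, hBsum, mul_one]
  -- geometric series
  have houtA' : ∀ a, outA a = pA a * s a / PE := by
    intro a
    rw [houtA, hsum, tsum_mul_right, tsum_geometric_of_lt_one (by linarith) (by linarith)]
    rw [show (1 : ℝ) - (1 - PE) = PE by ring]
    rw [mul_comm, div_eq_mul_inv]
  intro a b hab
  rw [hout, houtA', if_pos hab]
  rcases eq_or_ne (s a) 0 with h0 | h0
  · have hb0 : pB b = 0 := by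
      have := Summable.le_tsum (hsind a) b (fun b' _ => by split <;> [exact hB _; exact le_rfl])
      rw [if_pos hab, ← hs, h0] at this
      linarith [hB b]
    simp [h0, hb0]
  · field_simp
end
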